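/- Let σ > 0, p : ℝ → ℝ nonnegative measurable, λ ≠ 0, and φ : ℝ → ℝ measurable with ∫_ℝ p(y)|φ(y)| dy < ∞. If λ φ(x) = ∫_ℝ p(y) exp(−|x−y|/σ) φ(y) dy for all x ∈ ℝ, then φ(x) → 0 as |x| → ∞. -/
import Mathlib

open MeasureTheory Real Filter

lemma aux_tendsto_integral
    (σ : ℝ) (hσ : 0 < σ)
    (p : ℝ → ℝ) (hp_meas : Measurable p) (hp_nonneg : ∀ x, 0 ≤ p x)
    (φ : ℝ → ℝ) (hφ_meas : Measurable φ)
    (hφ_int : Integrable (fun y => p y * |φ y|))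
    (l : Filter ℝ) [l.IsCountablyGenerated]
    (hl : ∀ y : ℝ, Tendsto (fun x => |x - y|) l atTop) :
    Tendsto (fun x => ∫ y : ℝ, p y * Real.exp (-|x - y| / σ) * φ y) l (nhds 0) := by
  have hmeas : ∀ x : ℝ, AEStronglyMeasurable
      (fun y => p y * Real.exp (-|x - y| / σ) * φ y) volume := fun x =>
    ((hp_meas.mul ((measurable_const.sub measurable_id).abs.neg.div_const σ).exp).mul
      hφ_meas).aestronglyMeasurable
  have hbound : ∀ x : ℝ, ∀ y : ℝ,
      ‖p y * Real.exp (-|x - y| / σ) * φ y‖ ≤ p y * |φ y| := by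
    intro x y
    have h1 : Real.exp (-|x - y| / σ) ≤ 1 := by
      apply Real.exp_le_one_iff.mpr
      have : 0 ≤ |x - y| / σ := div_nonneg (abs_nonneg _) hσ.le
      rw [neg_div]; linarith
    calc ‖p y * Real.exp (-|x - y| / σ) * φ y‖
        = p y * Real.exp (-|x - y| / σ) * |φ y| := by
          rw [Real.norm_eq_abs, abs_mul, abs_mul, abs_of_nonneg (hp_nonneg y),
            abs_of_nonneg (Real.exp_pos _).le]
      _ ≤ p y * 1 * |φ y| :=
          mul_le_mul_of_nonneg_right
            (mul_le_mul_of_nonneg_left h1 (hp_nonneg y)) (abs_nonneg _)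
      _ = p y * |φ y| := by ring
  have hlim : ∀ y : ℝ,
      Tendsto (fun x => p y * Real.exp (-|x - y| / σ) * φ y) l (nhds 0) := by
    intro y
    have h1 : Tendsto (fun x => -|x - y| / σ) l atBot := by
      have := tendsto_neg_atBot_iff.mpr ((hl y).atTop_div_const hσ)
      simpa [neg_div] using this
    have h2 : Tendsto (fun x => Real.exp (-|x - y| / σ)) l (nhds 0) :=
      Real.tendsto_exp_atBot.comp h1
    have h3 := (h2.const_mul (p y)).mul_const (φ y)
    simpa only [mul_zero, zero_mul] using h3
  have key := tendsto_integral_filter_of_dominated_convergence (μ := volume)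
    (F := fun x y => p y * Real.exp (-|x - y| / σ) * φ y)
    (f := fun _ => (0 : ℝ)) (bound := fun y => p y * |φ y|)
    (Filter.Eventually.of_forall hmeas)
    (Filter.Eventually.of_forall (fun x => ae_of_all _ (hbound x)))
    hφ_int (ae_of_all _ hlim)
  simpa only [integral_zero] using key
/-- Any eigenfunction of the Laplace kernel with respect to a nonnegative
density `p` (with nonzero eigenvalue and `p·|φ|` integrable) vanishes at infinity. -/
theorem laplace_kernel_eigenfunction_tendsto_zero
    (σ : ℝ) (hσ : 0 < σ)
    (p : ℝ → ℝ) (hp_meas : Measurable p) (hp_nonneg : ∀ x, 0 ≤ p x)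
    (lam : ℝ) (hlam : lam ≠ 0)
    (φ : ℝ → ℝ) (hφ_meas : Measurable φ)
    (hφ_int : Integrable (fun y => p y * |φ y|))
    (heig : ∀ x : ℝ, lam * φ x = ∫ y : ℝ, p y * Real.exp (-|x - y| / σ) * φ y) :
    Tendsto φ (cocompact ℝ) (nhds 0) := by
  rw [cocompact_eq_atBot_atTop, tendsto_sup]
  constructor
  · have hl : ∀ y : ℝ, Tendsto (fun x : ℝ => |x - y|) atBot atTop := fun y =>
      (tendsto_abs_atBot_atTop).comp (tendsto_atBot_add_const_right _ (-y) tendsto_id)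
    have h := aux_tendsto_integral σ hσ p hp_meas hp_nonneg φ hφ_meas hφ_int atBot hl
    have h2 : Tendsto (fun x => lam * φ x) atBot (nhds 0) := by
      simpa [heig] using h
    have := h2.const_mul lam⁻¹
    simpa [inv_mul_cancel_left₀ hlam] using this
  · have hl : ∀ y : ℝ, Tendsto (fun x : ℝ => |x - y|) atTop atTop := fun y =>
      (tendsto_abs_atTop_atTop).comp (tendsto_atTop_add_const_right _ (-y) tendsto_id)
    have h := aux_tendsto_integral σ hσ p hp_meas hp_nonneg φ hφ_meas hφ_int atTop hl
    have h2 : Tendsto (fun x => lam * φ x) atTop (nhds 0) := by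
      simpa [heig] using h
    have := h2.const_mul lam⁻¹
    simpa [inv_mul_cancel_left₀ hlam] using this
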